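/- Private upper bound validity (GNSS): Let SS(X) > 0 and suppose μ is a random variable such that Pr[e^μ ≥ SS(X)] ≥ 1 − δ₂/2. Define U := ε(X) + SS(X)·Z + σ_s √(2 log(2/δ₂)) · e^μ, where Z ∼ N(0, σ_s²) is independent of μ (up to the coupling in the construction). Then Pr[U ≤ ε(X)] ≤ δ₂, i.e. with probability at least 1 − δ₂, U is an upper bound of ε(X). -/
import Mathlib


open MeasureTheory ProbabilityTheory Real
open scoped ENNReal NNReal

lemma gauss_exp_pointwise (v : NNReal) (hv : v ≠ 0) (t x : ℝ) :
    gaussianPDFReal 0 v x * rexp (t * x)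
      = rexp (t ^ 2 * v / 2) * gaussianPDFReal (t * v) v x := by
  have hv' : (v : ℝ) ≠ 0 := by exact_mod_cast hv
  simp only [gaussianPDFReal, sub_zero]
  have key : -x ^ 2 / (2 * (v:ℝ)) + t * x = -(x - t * (v:ℝ)) ^ 2 / (2 * (v:ℝ)) + t ^ 2 * (v:ℝ) / 2 := by
    field_simp
    ring
  rw [mul_assoc, ← Real.exp_add, key, Real.exp_add, ← mul_assoc, mul_comm]

lemma gauss_exp_integrable (v : NNReal) (hv : v ≠ 0) (t : ℝ) :
    Integrable (fun x => rexp (t * x)) (gaussianReal 0 v) := by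
  rw [gaussianReal_of_var_ne_zero 0 hv]
  have hpdfm : Measurable fun x => (gaussianPDFReal 0 v x).toNNReal :=
    (measurable_gaussianPDFReal 0 v).real_toNNReal
  have : gaussianPDF 0 v = fun x => ((gaussianPDFReal 0 v x).toNNReal : ℝ≥0∞) := by
    funext x; rfl
  rw [this, integrable_withDensity_iff_integrable_coe_smul hpdfm]
  have heq : (fun x => ((gaussianPDFReal 0 v x).toNNReal : ℝ) • rexp (t * x))
      = fun x => rexp (t ^ 2 * v / 2) * gaussianPDFReal (t * v) v x := by
    funext x
    rw [smul_eq_mul, Real.coe_toNNReal _ (gaussianPDFReal_nonneg 0 v x)]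
    exact gauss_exp_pointwise v hv t x
  rw [heq]
  exact (integrable_gaussianPDFReal (t * v) v).const_mul _

lemma gauss_exp_integral (v : NNReal) (hv : v ≠ 0) (t : ℝ) :
    ∫ x, rexp (t * x) ∂(gaussianReal 0 v) = rexp (t ^ 2 * v / 2) := by
  rw [gaussianReal_of_var_ne_zero 0 hv]
  have hpdfm : Measurable fun x => (gaussianPDFReal 0 v x).toNNReal :=
    (measurable_gaussianPDFReal 0 v).real_toNNReal
  have h1 : (volume.withDensity (gaussianPDF 0 v))
      = volume.withDensity (fun x => ((gaussianPDFReal 0 v x).toNNReal : ℝ≥0∞)) := rfl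
  rw [h1, integral_withDensity_eq_integral_smul hpdfm]
  have heq : (fun x => (gaussianPDFReal 0 v x).toNNReal • rexp (t * x))
      = fun x => rexp (t ^ 2 * v / 2) * gaussianPDFReal (t * v) v x := by
    funext x
    rw [NNReal.smul_def, smul_eq_mul, Real.coe_toNNReal _ (gaussianPDFReal_nonneg 0 v x)]
    exact gauss_exp_pointwise v hv t x
  rw [heq, integral_const_mul, integral_gaussianPDFReal_eq_one _ hv, mul_one]

/-- Private upper bound validity, GNSS: let `SS > 0`, let `μ` be a
random variable with `Pr[e^μ ≥ SS] ≥ 1 - δ₂/2`, and let `Z` have law `N(0, σ_s²)`.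
Then `U := ε + SS·Z + σ_s √(2 log(2/δ₂)) e^μ` satisfies `Pr[U ≤ ε] ≤ δ₂`, i.e. with
probability at least `1 - δ₂`, `U` upper-bounds `ε`. -/
theorem gnss_upper_bound_valid
    {Ω : Type*} [MeasurableSpace Ω] (P : Measure Ω) [IsProbabilityMeasure P]
    (εX SS σs δ₂ : ℝ) (hSS : 0 < SS) (hσs : 0 < σs) (hδ₂ : 0 < δ₂) (hδ₂1 : δ₂ < 1)
    (μ Z : Ω → ℝ) (hμ_meas : Measurable μ) (hZ_meas : Measurable Z)
    (v : NNReal) (hv : (v : ℝ) = σs ^ 2)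
    (hZ_law : Measure.map Z P = gaussianReal 0 v)
    (hμ_tail : P {ω | Real.exp (μ ω) ≥ SS} ≥ 1 - ENNReal.ofReal (δ₂ / 2)) :
    P {ω | εX + SS * Z ω + σs * Real.sqrt (2 * Real.log (2 / δ₂)) * Real.exp (μ ω)
        ≤ εX} ≤ ENNReal.ofReal δ₂ := by
  have hv0 : v ≠ 0 := by
    intro h
    rw [h] at hv
    simp at hv
    nlinarith
  set L : ℝ := Real.log (2 / δ₂) with hL
  have hL_pos : 0 < L := Real.log_pos (by rw [lt_div_iff₀ hδ₂]; linarith)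
  set c : ℝ := σs * Real.sqrt (2 * L) with hc
  have hc_pos : 0 < c := mul_pos hσs (Real.sqrt_pos.mpr (by linarith))
  have hc_sq : c ^ 2 = 2 * σs ^ 2 * L := by
    rw [hc, mul_pow, Real.sq_sqrt (by linarith : (0:ℝ) ≤ 2 * L)]; ring
  -- union bound
  have hsub : {ω | εX + SS * Z ω + c * Real.exp (μ ω) ≤ εX}
      ⊆ {ω | Real.exp (μ ω) < SS} ∪ {ω | Z ω ≤ -c} := by
    intro ω hω
    simp only [Set.mem_setOf_eq] at hω
    by_cases hA : Real.exp (μ ω) < SS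
    · exact Or.inl hA
    · right
      push_neg at hA
      have h1 : SS * Z ω ≤ -(c * Real.exp (μ ω)) := by linarith
      have h2 : c * SS ≤ c * Real.exp (μ ω) := by
        exact mul_le_mul_of_nonneg_left hA hc_pos.le
      have h3 : SS * Z ω ≤ SS * (-c) := by nlinarith
      exact Set.mem_setOf_eq ▸ le_of_mul_le_mul_left h3 hSS
  -- bound on the first event
  have hA_meas : MeasurableSet {ω | Real.exp (μ ω) ≥ SS} :=
    measurableSet_le (measurable_const) hμ_meas.exp
  have hbound1 : P {ω | Real.exp (μ ω) < SS} ≤ ENNReal.ofReal (δ₂ / 2) := by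
    have hcompl : {ω | Real.exp (μ ω) < SS} = {ω | Real.exp (μ ω) ≥ SS}ᶜ := by
      ext ω; simp [not_le]
    rw [hcompl, measure_compl hA_meas (measure_ne_top _ _)]
    rw [measure_univ]
    exact tsub_le_iff_tsub_le.mp hμ_tail
  -- Chernoff bound on the second event
  set t : ℝ := -c / σs ^ 2 with ht
  have ht_neg : t ≤ 0 := by
    apply div_nonpos_of_nonpos_of_nonneg <;> nlinarith
  have hint_gauss : Integrable (fun x => rexp (t * x)) (gaussianReal 0 v) :=
    gauss_exp_integrable v hv0 t
  have hexp_meas : AEStronglyMeasurable (fun x : ℝ => rexp (t * x)) (Measure.map Z P) :=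
    ((measurable_const_mul t).exp).aestronglyMeasurable
  have hint : Integrable (fun ω => rexp (t * Z ω)) P := by
    rw [← hZ_law] at hint_gauss
    exact (integrable_map_measure hexp_meas hZ_meas.aemeasurable).mp hint_gauss
  have hmgf : mgf Z P t = rexp (t ^ 2 * v / 2) := by
    rw [mgf, ← integral_map hZ_meas.aemeasurable hexp_meas, hZ_law]
    exact gauss_exp_integral v hv0 t
  have hchern := measure_le_le_exp_mul_mgf (X := Z) (μ := P) (-c) ht_neg hint
  rw [hmgf] at hchern
  have hval : rexp (-t * -c) * rexp (t ^ 2 * v / 2) = δ₂ / 2 := by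
    rw [← Real.exp_add]
    have hσs2 : σs ^ 2 ≠ 0 := by positivity
    have harg : -t * -c + t ^ 2 * v / 2 = -L := by
      rw [ht, hv]
      field_simp
      nlinarith [hc_sq]
    rw [harg, hL, Real.exp_neg, Real.exp_log (by positivity : (0:ℝ) < 2 / δ₂)]
    field_simp
  rw [hval] at hchern
  have hbound2 : P {ω | Z ω ≤ -c} ≤ ENNReal.ofReal (δ₂ / 2) := by
    rw [← ENNReal.ofReal_toReal (measure_ne_top P _)]
    exact ENNReal.ofReal_le_ofReal hchern
  calc P {ω | εX + SS * Z ω + c * Real.exp (μ ω) ≤ εX}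
      ≤ P ({ω | Real.exp (μ ω) < SS} ∪ {ω | Z ω ≤ -c}) := measure_mono hsub
    _ ≤ P {ω | Real.exp (μ ω) < SS} + P {ω | Z ω ≤ -c} := measure_union_le _ _
    _ ≤ ENNReal.ofReal (δ₂ / 2) + ENNReal.ofReal (δ₂ / 2) := add_le_add hbound1 hbound2
    _ = ENNReal.ofReal δ₂ := by
        rw [← ENNReal.ofReal_add (by linarith) (by linarith)]; norm_num
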